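/- The map φ : 𝒢 → L²(μ_ε) sending each future-distribution function g_ā to the equivalence class of its Radon–Nikodym density γ(g_ā), extended linearly, is injective: if Σ_{ā∈Λ} α_ā γ(g_ā) = 0 μ_ε-almost everywhere (finite linear combination), then Σ_{ā∈Λ} α_ā g_ā = 0 identically on O*. -/
import Mathlib


open MeasureTheory

/-- The cylinder set of infinite sequences beginning with the finite word `b`. -/
def cylinder {O : Type*} (b : List O) : Set (ℕ → O) :=
  {x | ∀ (i : ℕ) (h : i < b.length), x i = b.get ⟨i, h⟩}

theorem stmt10 {O : Type*} [Countable O] [Nonempty O]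
    [m : MeasurableSpace (ℕ → O)]
    (hm : m = MeasurableSpace.generateFrom {S | ∃ w : List O, S = cylinder w})
    (με : Measure (ℕ → O)) [IsFiniteMeasure με]
    (g : List O → List O → ℝ)
    (γ : List O → (ℕ → O) → ℝ)
    (hγm : ∀ c, Measurable (γ c)) (hγi : ∀ c, Integrable (γ c) με)
    (hdens : ∀ c w, ∫ x in cylinder w, γ c x ∂με = g c w)
    (Λ : Finset (List O)) (α : List O → ℝ)
    (hzero : ∀ᵐ x ∂με, ∑ c ∈ Λ, α c * γ c x = 0) :
    ∀ w : List O, ∑ c ∈ Λ, α c * g c w = 0 := by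
  intro w
  have h1 : ∑ c ∈ Λ, α c * g c w
      = ∫ x in cylinder w, ∑ c ∈ Λ, α c * γ c x ∂με := by
    rw [integral_finset_sum _ (fun c _ => ((hγi c).restrict).const_mul (α c))]
    simp_rw [integral_const_mul, hdens]
  rw [h1, integral_eq_zero_of_ae (ae_restrict_of_ae hzero)]
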